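/- Let f : X × X → [0,∞) satisfy: f(x,x) = 0, f(x,y) = f(y,x) > 0 for x ≠ y, and whenever f(x,y), f(y,z), f(z,w) are all ≤ ε, then f(x,w) ≤ 2ε. Define d(x,y) = inf over chains x = z₀, z₁, …, zₙ = y of ∑ f(z_{j-1}, z_j). Then d is a metric on X and (1/2) f(x,y) ≤ d(x,y) ≤ f(x,y) for all x, y. -/

import Mathlib

open Finset in
theorem keylem {X : Type*} (f : X → X → ℝ)
    (hnn : ∀ x y, 0 ≤ f x y) (hself : ∀ x, f x x = 0)
    (hchain : ∀ (ε : ℝ) (x y z w : X),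
      f x y ≤ ε → f y z ≤ ε → f z w ≤ ε → f x w ≤ 2 * ε) :
    ∀ (n : ℕ) (z : ℕ → X), f (z 0) (z n) ≤ 2 * ∑ j ∈ Finset.range n, f (z j) (z (j + 1)) := by
  intro n
  induction n using Nat.strong_induction_on with
  | _ n IH =>
    intro z
    match n with
    | 0 => simp [hself]
    | 1 => simp; nlinarith [hnn (z 0) (z 1)]
    | (m+2) =>
      classical
      set N := m + 2 with hN
      set S := ∑ j ∈ Finset.range N, f (z j) (z (j + 1)) with hS
      have hS0 : 0 ≤ S := Finset.sum_nonneg fun i _ => hnn _ _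
      set P : ℕ → ℝ := fun k => ∑ j ∈ Finset.range k, f (z j) (z (j + 1)) with hP
      set k := Nat.findGreatest (fun k => P k ≤ S / 2) (N - 1) with hk
      have hkle : k ≤ N - 1 := Nat.findGreatest_le _
      have hkN : k < N := lt_of_le_of_lt hkle (by omega)
      have hkP : P k ≤ S / 2 := by
        have := Nat.findGreatest_spec (P := fun j => P j ≤ S / 2) (m := 0) (n := N - 1)
          (Nat.zero_le _) (by simp [hP]; linarith)
        exact this
      have h1 : f (z 0) (z k) ≤ S := by
        have := IH k hkN z
        calc f (z 0) (z k) ≤ 2 * P k := this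
          _ ≤ S := by linarith
      have h2 : f (z k) (z (k + 1)) ≤ S := by
        refine Finset.single_le_sum (f := fun j => f (z j) (z (j+1))) (fun i _ => hnn _ _) ?_
        exact Finset.mem_range.2 hkN
      have hsplit : S = P (k+1) + ∑ j ∈ Finset.range (N - (k+1)), f (z (k+1+j)) (z (k+1+j+1)) := by
        have h := Finset.sum_range_add (fun j => f (z j) (z (j+1))) (k+1) (N-(k+1))
        have e : k + 1 + (N - (k+1)) = N := by omega
        rw [e] at h
        simpa [hS, hP] using h
      have h3 : f (z (k + 1)) (z N) ≤ S := by
        set mm := N - (k + 1) with hmm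
        have hmmN : mm < N := by omega
        have hIH := IH mm hmmN (fun j => z (k + 1 + j))
        have hend : k + 1 + mm = N := by omega
        simp only [hend] at hIH
        have htail : ∑ j ∈ Finset.range mm, f (z (k+1+j)) (z (k+1+j+1)) ≤ S / 2 := by
          rcases Nat.lt_or_ge k (N - 1) with h | h
          · have hnot : ¬ P (k+1) ≤ S / 2 :=
              Nat.findGreatest_is_greatest (P := fun j => P j ≤ S / 2) (n := N - 1)
                (by omega) (by omega)
            push_neg at hnot
            linarith [hsplit]
          · have h0 : mm = 0 := by omega
            simp [h0]
            linarith
        calc f (z (k+1)) (z N) ≤ 2 * ∑ j ∈ Finset.range mm, f (z (k+1+j)) (z (k+1+j+1)) := by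
              simpa [add_assoc] using hIH
          _ ≤ S := by linarith
      exact hchain S (z 0) (z k) (z (k+1)) (z N) h1 h2 h3


/-- If `f : X × X → [0,∞)` is symmetric, vanishes exactly on the diagonal
and satisfies the chain condition (`f(x,y), f(y,z), f(z,w) ≤ ε` implies
`f(x,w) ≤ 2ε`), then the chain metric
`d(x,y) = inf over chains x = z₀, …, zₙ = y of ∑ f(z_{j-1}, z_j)` is a metric on `X`
and `(1/2) f(x,y) ≤ d(x,y) ≤ f(x,y)` for all `x, y`. -/
theorem stmt8 {X : Type*} (f : X → X → ℝ)
    (hnn : ∀ x y, 0 ≤ f x y)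
    (hself : ∀ x, f x x = 0)
    (hsym : ∀ x y, f x y = f y x)
    (hpos : ∀ x y, x ≠ y → 0 < f x y)
    (hchain : ∀ (ε : ℝ) (x y z w : X),
      f x y ≤ ε → f y z ≤ ε → f z w ≤ ε → f x w ≤ 2 * ε)
    (d : X → X → ℝ)
    (hd : ∀ x y, d x y = sInf {r : ℝ | ∃ (n : ℕ) (z : ℕ → X), 1 ≤ n ∧ z 0 = x ∧
      z n = y ∧ r = ∑ j ∈ Finset.range n, f (z j) (z (j + 1))}) :
    ((∀ x y, 0 ≤ d x y) ∧ (∀ x y, d x y = d y x) ∧ (∀ x y, d x y = 0 ↔ x = y) ∧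
      (∀ x y z, d x z ≤ d x y + d y z)) ∧
    ∀ x y, (1 / 2) * f x y ≤ d x y ∧ d x y ≤ f x y := by
  have key := keylem f hnn hself hchain
  set T : X → X → Set ℝ := fun x y => {r : ℝ | ∃ (n : ℕ) (z : ℕ → X), 1 ≤ n ∧ z 0 = x ∧
      z n = y ∧ r = ∑ j ∈ Finset.range n, f (z j) (z (j + 1))} with hT
  have hmem : ∀ x y, f x y ∈ T x y := by
    intro x y
    refine ⟨1, fun j => if j = 0 then x else y, le_refl 1, by simp, by simp, by simp⟩
  have hne : ∀ x y, (T x y).Nonempty := fun x y => ⟨f x y, hmem x y⟩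
  have hlb : ∀ x y, ∀ r ∈ T x y, (1/2) * f x y ≤ r := by
    rintro x y r ⟨n, z, hn, h0, hn', rfl⟩
    have := key n z
    rw [h0, hn'] at this
    linarith
  have hbdd : ∀ x y, BddBelow (T x y) := fun x y => ⟨(1/2) * f x y, hlb x y⟩
  have hub : ∀ x y, d x y ≤ f x y := fun x y => by
    rw [hd]; exact csInf_le (hbdd x y) (hmem x y)
  have hlb' : ∀ x y, (1/2) * f x y ≤ d x y := fun x y => by
    rw [hd]; exact le_csInf (hne x y) (hlb x y)
  have hnn' : ∀ x y, 0 ≤ d x y := fun x y => le_trans (by linarith [hnn x y]) (hlb' x y)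
  -- symmetry via set equality
  have hsub : ∀ x y, T y x ⊆ T x y := by
    rintro x y r ⟨n, z, hn, h0, hn', rfl⟩
    refine ⟨n, fun j => z (n - j), hn, by simp [hn'], by simp [h0], ?_⟩
    rw [← Finset.sum_range_reflect (fun j => f (z j) (z (j+1))) n]
    refine Finset.sum_congr rfl ?_
    intro j hj
    have hjn : j < n := Finset.mem_range.1 hj
    have e1 : n - j = (n - 1 - j) + 1 := by omega
    have e2 : n - (j + 1) = n - 1 - j := by omega
    simp only [e1, e2]
    exact hsym _ _
  have hsymm : ∀ x y, d x y = d y x := by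
    intro x y
    rw [hd, hd]
    congr 1
    exact le_antisymm (fun r hr => hsub y x hr) (fun r hr => hsub x y hr)
  -- eq zero iff
  have hzero : ∀ x y, d x y = 0 ↔ x = y := by
    intro x y
    constructor
    · intro h
      by_contra hne'
      have := hlb' x y
      have := hpos x y hne'
      linarith [h ▸ hlb' x y]
    · rintro rfl
      have h1 := hub x x
      rw [hself] at h1
      exact le_antisymm h1 (hnn' x x)
  -- triangle
  have htri : ∀ x y z, d x z ≤ d x y + d y z := by
    intro x y zz
    have hcat : ∀ r1 ∈ T x y, ∀ r2 ∈ T y zz, r1 + r2 ∈ T x zz := by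
      rintro r1 ⟨n, z, hn, h0, hn', rfl⟩ r2 ⟨m, w, hm, g0, gm', rfl⟩
      refine ⟨n + m, fun j => if j < n then z j else w (j - n), by omega, ?_, ?_, ?_⟩
      · simp [Nat.lt_of_lt_of_le Nat.zero_lt_one hn, h0]
      · have : ¬ (n + m < n) := by omega
        simp [this, gm']
      · rw [Finset.sum_range_add]
        congr 1
        · refine Finset.sum_congr rfl ?_
          intro j hj
          have hjn : j < n := Finset.mem_range.1 hj
          rcases Nat.lt_or_ge (j+1) n with h | h
          · simp [hjn, h]
          · have e : j + 1 = n := by omega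
            have : ¬ (j + 1 < n) := by omega
            simp [hjn, this, e, hn', g0]
        · refine Finset.sum_congr rfl ?_
          intro j hj
          have : ¬ (n + j < n) := by omega
          have h2 : ¬ (n + j + 1 < n) := by omega
          have e1 : n + j - n = j := by omega
          have e2 : n + j + 1 - n = j + 1 := by omega
          simp [this, h2, e1, e2]
    have step1 : ∀ r1 ∈ T x y, d x zz - r1 ≤ d y zz := by
      intro r1 h1
      rw [hd y zz]
      refine le_csInf (hne y zz) ?_
      intro r2 h2
      have := csInf_le (hbdd x zz) (hcat r1 h1 r2 h2)
      rw [← hd x zz] at this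
      linarith
    have step2 : d x zz - d y zz ≤ d x y := by
      rw [hd x y]
      refine le_csInf (hne x y) ?_
      intro r1 h1
      linarith [step1 r1 h1]
    linarith
  exact ⟨⟨hnn', hsymm, hzero, htri⟩, fun x y => ⟨hlb' x y, hub x y⟩⟩
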